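/- (Sumudu convolution theorem) For f, g : [0,∞) → ℝ integrable against e^{-t/u}, the Sumudu transform of the convolution (f ∗ g)(t) = ∫₀^t f(ξ) g(t−ξ) dξ satisfies S[f ∗ g](u) = u · S[f](u) · S[g](u) for u > 0. -/
import Mathlib

open MeasureTheory Real Convolution

noncomputable def sumudu (f : ℝ → ℝ) (u : ℝ) : ℝ :=
  ∫ t in Set.Ioi (0 : ℝ), f (u * t) * Real.exp (-t)

/-- Convolution on [0, ∞): (f ∗ g)(t) = ∫₀^t f(ξ) g(t−ξ) dξ. -/
noncomputable def conv (f g : ℝ → ℝ) (t : ℝ) : ℝ :=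
  ∫ ξ in (0 : ℝ)..t, f ξ * g (t - ξ)

lemma sumudu_eq (h : ℝ → ℝ) (u : ℝ) (hu : 0 < u) :
    sumudu h u = u⁻¹ * ∫ x in Set.Ioi (0 : ℝ), Real.exp (-(x / u)) * h x := by
  have : sumudu h u = ∫ t in Set.Ioi (0 : ℝ),
      (fun x => Real.exp (-(x / u)) * h x) (u * t) := by
    unfold sumudu
    congr 1 with t
    rw [mul_comm]
    congr 2
    field_simp
  rw [this]
  simpa using MeasureTheory.integral_comp_mul_left_Ioi
    (fun x => Real.exp (-(x / u)) * h x) 0 hu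

theorem sumudu_convolution (f g : ℝ → ℝ) (u : ℝ) (hu : 0 < u)
    (hf : Measurable f) (hg : Measurable g)
    (hfi : IntegrableOn (fun t => Real.exp (-(t / u)) * f t) (Set.Ioi (0 : ℝ)))
    (hgi : IntegrableOn (fun t => Real.exp (-(t / u)) * g t) (Set.Ioi (0 : ℝ))) :
    sumudu (conv f g) u = u * sumudu f u * sumudu g u := by
  set F : ℝ → ℝ := (Set.Ioi 0).indicator (fun t => Real.exp (-(t / u)) * f t) with hF
  set G : ℝ → ℝ := (Set.Ioi 0).indicator (fun t => Real.exp (-(t / u)) * g t) with hG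
  have hFi : Integrable F := (integrable_indicator_iff measurableSet_Ioi).2 hfi
  have hGi : Integrable G := (integrable_indicator_iff measurableSet_Ioi).2 hgi
  have key : ∀ t : ℝ, (F ⋆[ContinuousLinearMap.mul ℝ ℝ] G) t
      = (Set.Ioi 0).indicator (fun t => Real.exp (-(t / u)) * conv f g t) t := by
    intro t
    have hpt : ∀ ξ : ℝ, F ξ * G (t - ξ)
        = (Set.Ioo 0 t).indicator
            (fun ξ => Real.exp (-(t / u)) * (f ξ * g (t - ξ))) ξ := by
      intro ξ
      by_cases h1 : (0 : ℝ) < ξ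
      · by_cases h2 : ξ < t
        · rw [Set.indicator_of_mem (Set.mem_Ioo.2 ⟨h1, h2⟩),
            hF, hG, Set.indicator_of_mem (Set.mem_Ioi.2 h1),
            Set.indicator_of_mem (Set.mem_Ioi.2 (by linarith : (0:ℝ) < t - ξ))]
          have : Real.exp (-(ξ / u)) * Real.exp (-((t - ξ) / u))
              = Real.exp (-(t / u)) := by
            rw [← Real.exp_add]; congr 1; field_simp; ring
          calc Real.exp (-(ξ / u)) * f ξ * (Real.exp (-((t - ξ) / u)) * g (t - ξ))
              = (Real.exp (-(ξ / u)) * Real.exp (-((t - ξ) / u))) * (f ξ * g (t - ξ)) := by ring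
            _ = Real.exp (-(t / u)) * (f ξ * g (t - ξ)) := by rw [this]
        · rw [Set.indicator_of_notMem (fun hmem => h2 hmem.2),
            hG, Set.indicator_of_notMem (by simp; linarith), mul_zero]
      · rw [Set.indicator_of_notMem (fun hmem => h1 hmem.1),
          hF, Set.indicator_of_notMem (by simpa using h1), zero_mul]
    have : (F ⋆[ContinuousLinearMap.mul ℝ ℝ] G) t
        = ∫ ξ in Set.Ioo 0 t, Real.exp (-(t / u)) * (f ξ * g (t - ξ)) := by
      rw [convolution_def]
      simp_rw [ContinuousLinearMap.mul_apply', hpt]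
      exact integral_indicator measurableSet_Ioo
    rw [this]
    by_cases ht : (0 : ℝ) < t
    · rw [Set.indicator_of_mem (Set.mem_Ioi.2 ht)]
      rw [MeasureTheory.integral_const_mul]
      congr 1
      rw [conv, intervalIntegral.integral_of_le ht.le,
        MeasureTheory.integral_Ioc_eq_integral_Ioo]
    · rw [Set.indicator_of_notMem (by simpa using ht), Set.Ioo_eq_empty (by simpa using ht)]
      simp
  have hconv : ∫ t, (F ⋆[ContinuousLinearMap.mul ℝ ℝ] G) t
      = (∫ t, F t) * (∫ t, G t) := by
    simpa using integral_convolution (ContinuousLinearMap.mul ℝ ℝ) hFi hGi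
  have hC : ∫ t in Set.Ioi (0:ℝ), Real.exp (-(t / u)) * conv f g t
      = (∫ t in Set.Ioi (0:ℝ), Real.exp (-(t / u)) * f t)
        * (∫ t in Set.Ioi (0:ℝ), Real.exp (-(t / u)) * g t) := by
    rw [← integral_indicator measurableSet_Ioi, ← funext key, hconv, hF, hG,
      integral_indicator measurableSet_Ioi, integral_indicator measurableSet_Ioi]
  rw [sumudu_eq _ u hu, sumudu_eq f u hu, sumudu_eq g u hu, hC]
  field_simp
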